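/- (Leitmann's fundamental lemma via Hahn's quantum operator) Let a, b ∈ I with a < b, and let f, f̄ : [a,b]_{q,ω} × ℝ × ℝ → ℝ both satisfy the Lagrangian regularity, with functionals ℒ[y] := ∫_{a}^{b} f(t, y(qt+ω), D_{q,ω}y(t)) d_{q,ω}t and ℒ̄[ȳ] := ∫_{a}^{b} f̄(t, ȳ(qt+ω), D_{q,ω}ȳ(t)) d_{q,ω}t. Let z : [a,b]_{q,ω} × ℝ → ℝ be a transformation with a unique inverse z̄ (i.e., for each t ∈ [a,b]_{q,ω}, ȳ₀ = z̄(t, y₀) if and only if y₀ = z(t, ȳ₀)) inducing a one-to-one correspondence y(t) = z(t, ȳ(t)) between the functions y ∈ 𝔼 with y(a) = α, y(b) = β and the functions ȳ ∈ 𝔼 with ȳ(a) = z̄(a,α), ȳ(b) = z̄(b,β). Suppose there exists G : [a,b]_{q,ω} × ℝ → ℝ such that for every such corresponding pair (y, ȳ), the function t ↦ G(t, ȳ(t)) is continuous at ω₀ and q,ω-differentiable with f(t, y(qt+ω), D_{q,ω}y(t)) − f̄(t, ȳ(qt+ω), D_{q,ω}ȳ(t)) = D_{q,ω}[t ↦ G(t,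 ȳ(t))](t) for all t ∈ [a,b]_{q,ω}. If ȳ* minimizes (resp. maximizes) ℒ̄ over all ȳ ∈ 𝔼 satisfying ȳ(a) = z̄(a,α), ȳ(b) = z̄(b,β), then y*(t) := z(t, ȳ*(t)) minimizes (resp. maximizes) ℒ over all y ∈ 𝔼 satisfying y(a) = α, y(b) = β. -/

import Mathlib

open Filter Topology

noncomputable section

/-- The fixed point `ω₀ := ω/(1-q)` of `t ↦ qt + ω`. -/
def hahnOmega0 (q ω : ℝ) : ℝ := ω / (1 - q)

/-- The Hahn difference operator `D_{q,ω}`: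
`D_{q,ω}f(t) = (f(qt+ω) - f t)/((qt+ω) - t)` for `t ≠ ω₀`, and the ordinary
derivative at `t = ω₀`. -/
def hahnDeriv (q ω : ℝ) (f : ℝ → ℝ) (t : ℝ) : ℝ :=
  if t = hahnOmega0 q ω then deriv f t
  else (f (q * t + ω) - f t) / ((q * t + ω) - t)

/-- `f` is `q,ω`-differentiable at `t` (automatic off `ω₀`; at `ω₀` it means
ordinary (Fréchet) differentiability). -/
def HahnDiffAt (q ω : ℝ) (f : ℝ → ℝ) (t : ℝ) : Prop :=
  t = hahnOmega0 q ω → DifferentiableAt ℝ f t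

/-- The point `x q^k + [k]_{q,ω}` where `[k]_{q,ω} = ω(1-q^k)/(1-q)`. -/
def jnPoint (q ω x : ℝ) (k : ℕ) : ℝ := x * q ^ k + ω * (1 - q ^ k) / (1 - q)

/-- Partial sums of the Jackson–Nörlund series at `x`. -/
def jnPartial (q ω : ℝ) (f : ℝ → ℝ) (x : ℝ) (n : ℕ) : ℝ :=
  ∑ k ∈ Finset.range n, q ^ k * f (jnPoint q ω x k)

/-- Convergence of the Jackson–Nörlund series `Σ q^k f(x q^k + [k]_{q,ω})`. -/
def JNConvergesAt (q ω : ℝ) (f : ℝ → ℝ) (x : ℝ) : Prop :=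
  ∃ S : ℝ, Tendsto (jnPartial q ω f x) atTop (𝓝 S)

/-- The Jackson–Nörlund integral `∫_{ω₀}^{x} f(t) d_{q,ω}t`. -/
def jnSum (q ω : ℝ) (f : ℝ → ℝ) (x : ℝ) : ℝ :=
  (x * (1 - q) - ω) * limUnder atTop (jnPartial q ω f x)

/-- The Jackson–Nörlund integral `∫_{a}^{b} f(t) d_{q,ω}t`. -/
def jnIntegral (q ω : ℝ) (f : ℝ → ℝ) (a b : ℝ) : ℝ :=
  jnSum q ω f b - jnSum q ω f a

/-- The orbit `{q^n s + [n]_{q,ω} : n ∈ ℕ}`. -/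
def qwOrbit (q ω s : ℝ) : Set ℝ := Set.range (jnPoint q ω s)

/-- The orbit together with `ω₀`, i.e. `[s]_{q,ω}`. -/
def qwClosedOrbit (q ω s : ℝ) : Set ℝ := qwOrbit q ω s ∪ {hahnOmega0 q ω}

/-- The `q,ω`-interval `[a,b]_{q,ω}`. -/
def qwInterval (q ω a b : ℝ) : Set ℝ :=
  qwOrbit q ω a ∪ qwOrbit q ω b ∪ {hahnOmega0 q ω}

/-- `g(t,·)` is differentiable at `θ₀`, uniformly in `t ∈ S`, with
partial derivative `g' t = ∂₂g(t,θ₀)`. -/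
def UnifDiffAt (g : ℝ → ℝ → ℝ) (S : Set ℝ) (θ₀ : ℝ) (g' : ℝ → ℝ) : Prop :=
  (∀ t ∈ S, HasDerivAt (g t) (g' t) θ₀) ∧
  ∀ ε > 0, ∃ δ > 0, ∀ θ : ℝ, 0 < |θ - θ₀| → |θ - θ₀| < δ →
    ∀ t ∈ S, |(g t θ - g t θ₀) / (θ - θ₀) - g' t| < ε

/-- Partial derivative of a Lagrangian `f(t,u,v)` in its second argument. -/
def pd2 (f : ℝ → ℝ → ℝ → ℝ) (t u v : ℝ) : ℝ := deriv (fun z => f t z v) u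

/-- Partial derivative of a Lagrangian `f(t,u,v)` in its third argument. -/
def pd3 (f : ℝ → ℝ → ℝ → ℝ) (t u v : ℝ) : ℝ := deriv (fun z => f t u z) v

/-- The integrand `t ↦ f(t, y(qt+ω), D_{q,ω}y(t))`. -/
def lagComp (q ω : ℝ) (f : ℝ → ℝ → ℝ → ℝ) (y : ℝ → ℝ) (t : ℝ) : ℝ :=
  f t (y (q * t + ω)) (hahnDeriv q ω y t)

/-- The variational functional `ℒ[y] = ∫_a^b f(t, y(qt+ω), D_{q,ω}y(t)) d_{q,ω}t`. -/
def varFunc (q ω a b : ℝ) (f : ℝ → ℝ → ℝ → ℝ) (y : ℝ → ℝ) : ℝ :=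
  jnIntegral q ω (lagComp q ω f y) a b

/-- Membership in the space `𝔼`: continuous at `ω₀`, `q,ω`-differentiable on `I`,
with `D_{q,ω}y` bounded on `[a,b]_{q,ω}` and continuous at `ω₀`. -/
def VarMemE (q ω : ℝ) (I : Set ℝ) (a b : ℝ) (y : ℝ → ℝ) : Prop :=
  ContinuousAt y (hahnOmega0 q ω) ∧
  (∀ t ∈ I, HahnDiffAt q ω y t) ∧
  (∃ M : ℝ, ∀ t ∈ qwInterval q ω a b, |hahnDeriv q ω y t| ≤ M) ∧
  ContinuousAt (hahnDeriv q ω y) (hahnOmega0 q ω)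

/-- The norm `‖y‖₁ = sup_{[a,b]_{q,ω}} |y| + sup_{[a,b]_{q,ω}} |D_{q,ω}y|`. -/
def varNorm1 (q ω a b : ℝ) (y : ℝ → ℝ) : ℝ :=
  sSup ((fun t => |y t|) '' qwInterval q ω a b) +
    sSup ((fun t => |hahnDeriv q ω y t|) '' qwInterval q ω a b)

/-- Admissible functions: members of `𝔼` with `y(a) = α`, `y(b) = β`. -/
def VarAdmissible (q ω : ℝ) (I : Set ℝ) (a b α β : ℝ) (y : ℝ → ℝ) : Prop :=
  VarMemE q ω I a b y ∧ y a = α ∧ y b = β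

/-- Admissible variations: members of `𝔼` vanishing at `a` and `b`. -/
def VarAdmissibleVar (q ω : ℝ) (I : Set ℝ) (a b : ℝ) (h : ℝ → ℝ) : Prop :=
  VarMemE q ω I a b h ∧ h a = 0 ∧ h b = 0

/-- Regularity of the Lagrangian: `(u,v) ↦ f(t,u,v)` is `C¹` for each `t`, and
the compositions with any `y ∈ 𝔼` (of `f`, `∂₂f`, `∂₃f`) are continuous at `ω₀`. -/
def LagrangianRegular (q ω : ℝ) (I : Set ℝ) (a b : ℝ) (f : ℝ → ℝ → ℝ → ℝ) : Prop :=
  (∀ t ∈ qwInterval q ω a b, ContDiff ℝ 1 (fun p : ℝ × ℝ => f t p.1 p.2)) ∧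
  ∀ y : ℝ → ℝ, VarMemE q ω I a b y →
    ContinuousAt (lagComp q ω f y) (hahnOmega0 q ω) ∧
    ContinuousAt (fun t => pd2 f t (y (q * t + ω)) (hahnDeriv q ω y t)) (hahnOmega0 q ω) ∧
    ContinuousAt (fun t => pd3 f t (y (q * t + ω)) (hahnDeriv q ω y t)) (hahnOmega0 q ω)

/-- `g(t,ε) = f(t, y(qt+ω) + ε h(qt+ω), D_{q,ω}y(t) + ε D_{q,ω}h(t))`. -/
def varied (q ω : ℝ) (f : ℝ → ℝ → ℝ → ℝ) (y h : ℝ → ℝ) (t ε : ℝ) : ℝ :=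
  f t (y (q * t + ω) + ε * h (q * t + ω)) (hahnDeriv q ω y t + ε * hahnDeriv q ω h t)

/-- The first-variation integrand
`∂₂f(t, y(qt+ω), D_{q,ω}y t) h(qt+ω) + ∂₃f(t, y(qt+ω), D_{q,ω}y t) D_{q,ω}h t`. -/
def varIntegrand (q ω : ℝ) (f : ℝ → ℝ → ℝ → ℝ) (y h : ℝ → ℝ) (t : ℝ) : ℝ :=
  pd2 f t (y (q * t + ω)) (hahnDeriv q ω y t) * h (q * t + ω) +
    pd3 f t (y (q * t + ω)) (hahnDeriv q ω y t) * hahnDeriv q ω h t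

/-- The standing regularity assumptions for the functional associated to `f`. -/
def StandingAssumptions (q ω : ℝ) (I : Set ℝ) (a b α β : ℝ)
    (f : ℝ → ℝ → ℝ → ℝ) : Prop :=
  ∀ y : ℝ → ℝ, VarAdmissible q ω I a b α β y →
    ∀ h : ℝ → ℝ, VarAdmissibleVar q ω I a b h →
      UnifDiffAt (varied q ω f y h) (qwClosedOrbit q ω a) 0 (varIntegrand q ω f y h) ∧
      UnifDiffAt (varied q ω f y h) (qwClosedOrbit q ω b) 0 (varIntegrand q ω f y h) ∧
      (∃ δ > 0, ∀ ε : ℝ, |ε| < δ →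
        JNConvergesAt q ω (lagComp q ω f (fun s => y s + ε * h s)) a ∧
        JNConvergesAt q ω (lagComp q ω f (fun s => y s + ε * h s)) b) ∧
      JNConvergesAt q ω (varIntegrand q ω f y h) a ∧
      JNConvergesAt q ω (varIntegrand q ω f y h) b

/-- The Hahn quantum Euler–Lagrange equation for `f` along `y` on `[a,b]_{q,ω}`. -/
def EulerLagrange (q ω a b : ℝ) (f : ℝ → ℝ → ℝ → ℝ) (y : ℝ → ℝ) : Prop :=
  ∀ t ∈ qwInterval q ω a b,
    hahnDeriv q ω (fun s => pd3 f s (y (q * s + ω)) (hahnDeriv q ω y s)) t =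
      pd2 f t (y (q * t + ω)) (hahnDeriv q ω y t)

lemma jnPoint_zero' (q ω x : ℝ) : jnPoint q ω x 0 = x := by
  simp [jnPoint]

lemma jnPoint_eq' (q ω x : ℝ) (hq : q ≠ 1) (k : ℕ) :
    jnPoint q ω x k = q ^ k * (x - hahnOmega0 q ω) + hahnOmega0 q ω := by
  have h : 1 - q ≠ 0 := sub_ne_zero.2 (Ne.symm hq)
  unfold jnPoint hahnOmega0
  field_simp
  ring

lemma jnPoint_succ' (q ω x : ℝ) (hq : q ≠ 1) (k : ℕ) :
    q * jnPoint q ω x k + ω = jnPoint q ω x (k + 1) := by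
  have h : 1 - q ≠ 0 := sub_ne_zero.2 (Ne.symm hq)
  unfold jnPoint
  field_simp
  ring

lemma jnPoint_ne_omega0' (q ω x : ℝ) (hq0 : 0 < q) (hq1 : q < 1)
    (hx : x ≠ hahnOmega0 q ω) (k : ℕ) : jnPoint q ω x k ≠ hahnOmega0 q ω := by
  rw [jnPoint_eq' q ω x (ne_of_lt hq1) k]
  intro h
  have h' : q ^ k * (x - hahnOmega0 q ω) = 0 := by linarith
  rcases mul_eq_zero.1 h' with h'' | h''
  · exact pow_ne_zero k (ne_of_gt hq0) h''
  · exact hx (sub_eq_zero.1 h'')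

lemma jnSum_omega0' (q ω : ℝ) (hq : q ≠ 1) (g : ℝ → ℝ) :
    jnSum q ω g (hahnOmega0 q ω) = 0 := by
  have h : 1 - q ≠ 0 := sub_ne_zero.2 (Ne.symm hq)
  have h2 : hahnOmega0 q ω * (1 - q) - ω = 0 := by
    unfold hahnOmega0; field_simp; ring
  rw [jnSum, h2, zero_mul]

lemma jnSum_congr' (q ω x : ℝ) (g h : ℝ → ℝ)
    (hgh : ∀ k, g (jnPoint q ω x k) = h (jnPoint q ω x k)) :
    jnSum q ω g x = jnSum q ω h x := by
  have he : jnPartial q ω g x = jnPartial q ω h x := by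
    funext n
    exact Finset.sum_congr rfl fun k _ => by rw [hgh k]
  unfold jnSum
  rw [he]

lemma jnSum_sub' (q ω x : ℝ) (g h : ℝ → ℝ)
    (hg : JNConvergesAt q ω g x) (hh : JNConvergesAt q ω h x) :
    jnSum q ω (fun t => g t - h t) x = jnSum q ω g x - jnSum q ω h x := by
  obtain ⟨S, hS⟩ := hg
  obtain ⟨T, hT⟩ := hh
  have hsub : jnPartial q ω (fun t => g t - h t) x =
      fun n => jnPartial q ω g x n - jnPartial q ω h x n := by
    funext n
    simp [jnPartial, mul_sub, Finset.sum_sub_distrib]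
  rw [jnSum, jnSum, jnSum, hS.limUnder_eq, hT.limUnder_eq, hsub,
    (hS.sub hT).limUnder_eq]
  ring

lemma jnSum_hahnDeriv' (q ω : ℝ) (hq0 : 0 < q) (hq1 : q < 1) (F : ℝ → ℝ)
    (hF : ContinuousAt F (hahnOmega0 q ω)) (x : ℝ) :
    jnSum q ω (hahnDeriv q ω F) x = F x - F (hahnOmega0 q ω) := by
  have hqne : q ≠ 1 := ne_of_lt hq1
  by_cases hx : x = hahnOmega0 q ω
  · rw [hx, jnSum_omega0' q ω hqne]; ring
  · set ω₀ := hahnOmega0 q ω with hω₀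
    set c := (q - 1) * (x - ω₀) with hc
    have hcne : c ≠ 0 :=
      mul_ne_zero (sub_ne_zero.2 hqne) (sub_ne_zero.2 hx)
    have hterm : ∀ k, q ^ k * hahnDeriv q ω F (jnPoint q ω x k)
        = F (jnPoint q ω x (k + 1)) / c - F (jnPoint q ω x k) / c := by
      intro k
      have hqk : (q : ℝ) ^ k ≠ 0 := pow_ne_zero k (ne_of_gt hq0)
      rw [hahnDeriv, if_neg (jnPoint_ne_omega0' q ω x hq0 hq1 hx k),
        jnPoint_succ' q ω x hqne k]
      have hden : jnPoint q ω x (k + 1) - jnPoint q ω x k = q ^ k * c := by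
        rw [jnPoint_eq' q ω x hqne k, jnPoint_eq' q ω x hqne (k + 1)]
        ring
      rw [hden]
      field_simp
    have hpartial : jnPartial q ω (hahnDeriv q ω F) x =
        fun n => F (jnPoint q ω x n) / c - F x / c := by
      funext n
      unfold jnPartial
      rw [Finset.sum_congr rfl fun k _ => hterm k,
        Finset.sum_range_sub (fun k => F (jnPoint q ω x k) / c), jnPoint_zero']
    have htend : Tendsto (fun n : ℕ => jnPoint q ω x n) atTop (𝓝 ω₀) := by
      have h1 : Tendsto (fun n : ℕ => q ^ n) atTop (𝓝 0) :=
        tendsto_pow_atTop_nhds_zero_of_lt_one hq0.le hq1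
      have h2 := (h1.mul_const (x - ω₀)).add_const ω₀
      rw [zero_mul, zero_add] at h2
      have he : (fun n : ℕ => jnPoint q ω x n) =
          fun n : ℕ => q ^ n * (x - ω₀) + ω₀ := by
        funext n; exact jnPoint_eq' q ω x hqne n
      rw [he]
      exact h2
    have hlim : Tendsto (jnPartial q ω (hahnDeriv q ω F) x) atTop
        (𝓝 (F ω₀ / c - F x / c)) := by
      rw [hpartial]
      exact ((hF.tendsto.comp htend).div_const c).sub tendsto_const_nhds
    rw [jnSum, hlim.limUnder_eq]
    have hx' : x * (1 - q) - ω = -c := by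
      rw [hc, hω₀]
      unfold hahnOmega0
      have h : 1 - q ≠ 0 := sub_ne_zero.2 (Ne.symm hqne)
      field_simp
      ring
    rw [hx']
    field_simp
    ring

lemma lagComp_congr_orbit' (q ω x : ℝ) (hq0 : 0 < q) (hq1 : q < 1)
    (hx : x ≠ hahnOmega0 q ω) (f : ℝ → ℝ → ℝ → ℝ) (y₁ y₂ : ℝ → ℝ)
    (hy : ∀ k, y₁ (jnPoint q ω x k) = y₂ (jnPoint q ω x k)) (k : ℕ) :
    lagComp q ω f y₁ (jnPoint q ω x k) = lagComp q ω f y₂ (jnPoint q ω x k) := by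
  have hqne : q ≠ 1 := ne_of_lt hq1
  have hne := jnPoint_ne_omega0' q ω x hq0 hq1 hx k
  unfold lagComp hahnDeriv
  rw [if_neg hne, if_neg hne, jnPoint_succ' q ω x hqne k, hy k, hy (k + 1)]

/-- Leitmann's fundamental lemma via Hahn's quantum operator. -/
theorem hahn_leitmann_fundamental_lemma (q ω : ℝ) (hq0 : 0 < q) (hq1 : q < 1)
    (hω : 0 < ω) (I : Set ℝ) (hI : I.OrdConnected) (hmem : hahnOmega0 q ω ∈ I)
    (a b : ℝ) (ha : a ∈ I) (hb : b ∈ I) (hab : a < b) (α β : ℝ)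
    (f fbar : ℝ → ℝ → ℝ → ℝ)
    (hregf : LagrangianRegular q ω I a b f)
    (hregfbar : LagrangianRegular q ω I a b fbar)
    (z zbar : ℝ → ℝ → ℝ)
    (hinv : ∀ t ∈ qwInterval q ω a b, ∀ y₀ ybar₀ : ℝ,
        ybar₀ = zbar t y₀ ↔ y₀ = z t ybar₀)
    (hcorr₁ : ∀ y : ℝ → ℝ, VarAdmissible q ω I a b α β y →
        VarAdmissible q ω I a b (zbar a α) (zbar b β) (fun t => zbar t (y t)))
    (hcorr₂ : ∀ ybar : ℝ → ℝ, VarAdmissible q ω I a b (zbar a α) (zbar b β) ybar →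
        VarAdmissible q ω I a b α β (fun t => z t (ybar t)))
    (hintf : ∀ y : ℝ → ℝ, VarAdmissible q ω I a b α β y →
        JNConvergesAt q ω (lagComp q ω f y) a ∧
        JNConvergesAt q ω (lagComp q ω f y) b)
    (hintfbar : ∀ ybar : ℝ → ℝ, VarAdmissible q ω I a b (zbar a α) (zbar b β) ybar →
        JNConvergesAt q ω (lagComp q ω fbar ybar) a ∧
        JNConvergesAt q ω (lagComp q ω fbar ybar) b)
    (G : ℝ → ℝ → ℝ)
    (hG : ∀ ybar : ℝ → ℝ, VarAdmissible q ω I a b (zbar a α) (zbar b β) ybar →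
        ContinuousAt (fun t => G t (ybar t)) (hahnOmega0 q ω) ∧
        (∀ t ∈ I, HahnDiffAt q ω (fun s => G s (ybar s)) t) ∧
        ∀ t ∈ qwInterval q ω a b,
          lagComp q ω f (fun s => z s (ybar s)) t - lagComp q ω fbar ybar t =
            hahnDeriv q ω (fun s => G s (ybar s)) t)
    (ybarstar : ℝ → ℝ)
    (hstar : VarAdmissible q ω I a b (zbar a α) (zbar b β) ybarstar) :
    ((∀ ybar : ℝ → ℝ, VarAdmissible q ω I a b (zbar a α) (zbar b β) ybar →
        varFunc q ω a b fbar ybarstar ≤ varFunc q ω a b fbar ybar) →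
      ∀ y : ℝ → ℝ, VarAdmissible q ω I a b α β y →
        varFunc q ω a b f (fun t => z t (ybarstar t)) ≤ varFunc q ω a b f y) ∧
    ((∀ ybar : ℝ → ℝ, VarAdmissible q ω I a b (zbar a α) (zbar b β) ybar →
        varFunc q ω a b fbar ybar ≤ varFunc q ω a b fbar ybarstar) →
      ∀ y : ℝ → ℝ, VarAdmissible q ω I a b α β y →
        varFunc q ω a b f y ≤ varFunc q ω a b f (fun t => z t (ybarstar t))) := by
  have hqne : q ≠ 1 := ne_of_lt hq1
  have hmemA : ∀ k, jnPoint q ω a k ∈ qwInterval q ω a b :=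
    fun k => Or.inl (Or.inl ⟨k, rfl⟩)
  have hmemB : ∀ k, jnPoint q ω b k ∈ qwInterval q ω a b :=
    fun k => Or.inl (Or.inr ⟨k, rfl⟩)
  -- core identity
  have core : ∀ ybar : ℝ → ℝ, VarAdmissible q ω I a b (zbar a α) (zbar b β) ybar →
      varFunc q ω a b f (fun t => z t (ybar t)) =
        varFunc q ω a b fbar ybar + (G b (ybar b) - G a (ybar a)) := by
    intro ybar hadm
    obtain ⟨hGcont, hGdiff, hGeq⟩ := hG ybar hadm
    have hyadm := hcorr₂ ybar hadm
    have hconv₁ := hintf _ hyadm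
    have hconv₂ := hintfbar ybar hadm
    have key : ∀ x : ℝ, (∀ k, jnPoint q ω x k ∈ qwInterval q ω a b) →
        JNConvergesAt q ω (lagComp q ω f (fun t => z t (ybar t))) x →
        JNConvergesAt q ω (lagComp q ω fbar ybar) x →
        jnSum q ω (lagComp q ω f (fun t => z t (ybar t))) x
          - jnSum q ω (lagComp q ω fbar ybar) x
          = G x (ybar x) - G (hahnOmega0 q ω) (ybar (hahnOmega0 q ω)) := by
      intro x hxmem hc1 hc2
      have h5 := jnSum_congr' q ω x
        (fun t => lagComp q ω f (fun s => z s (ybar s)) t - lagComp q ω fbar ybar t)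
        (hahnDeriv q ω (fun s => G s (ybar s)))
        (fun k => hGeq _ (hxmem k))
      rw [← jnSum_sub' q ω x _ _ hc1 hc2, h5,
        jnSum_hahnDeriv' q ω hq0 hq1 _ hGcont x]
    have ka := key a hmemA hconv₁.1 hconv₂.1
    have kb := key b hmemB hconv₁.2 hconv₂.2
    unfold varFunc jnIntegral
    linarith
  -- varFunc f y depends only on the values on the interval
  have congrY : ∀ y : ℝ → ℝ, VarAdmissible q ω I a b α β y →
      varFunc q ω a b f y =
        varFunc q ω a b f (fun t => z t (zbar t (y t))) := by
    intro y hy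
    have hagree : ∀ t ∈ qwInterval q ω a b, y t = z t (zbar t (y t)) :=
      fun t ht => (hinv t ht (y t) (zbar t (y t))).mp rfl
    have key : ∀ x : ℝ, (∀ k, jnPoint q ω x k ∈ qwInterval q ω a b) →
        jnSum q ω (lagComp q ω f y) x =
          jnSum q ω (lagComp q ω f (fun t => z t (zbar t (y t)))) x := by
      intro x hx
      by_cases hxo : x = hahnOmega0 q ω
      · rw [hxo, jnSum_omega0' q ω hqne, jnSum_omega0' q ω hqne]
      · exact jnSum_congr' q ω x _ _
          (lagComp_congr_orbit' q ω x hq0 hq1 hxo f y _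
            (fun k => hagree _ (hx k)))
    unfold varFunc jnIntegral
    rw [key a hmemA, key b hmemB]
  have h1 := core ybarstar hstar
  rw [hstar.2.1, hstar.2.2] at h1
  constructor
  · intro hmin y hy
    have hybar := hcorr₁ y hy
    have h2 := core _ hybar
    have e3 : zbar a (y a) = zbar a α := hybar.2.1
    have e4 : zbar b (y b) = zbar b β := hybar.2.2
    rw [e3, e4] at h2
    have h3 := congrY y hy
    have h4 := hmin _ hybar
    linarith
  · intro hmax y hy
    have hybar := hcorr₁ y hy
    have h2 := core _ hybar
    have e3 : zbar a (y a) = zbar a α := hybar.2.1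
    have e4 : zbar b (y b) = zbar b β := hybar.2.2
    rw [e3, e4] at h2
    have h3 := congrY y hy
    have h4 := hmax _ hybar
    linarith
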